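/- Let $H \geq 1$ and let $k$ be an even non-negative integer. Then $$\frac{1}{H^{k/2}} \sum_{\substack{(k_1,\dots,k_H)\in\mathbb{Z}_{\geq 0}^H \\ k_1+\dots+k_H=k \\ \text{all } k_i \text{ even}}} \binom{k}{k_1,\dots,k_H} \prod_{i=1}^H \binom{k_i}{k_i/2} \cdot 2^{-|\{i : k_i \geq 1\}|} \leq \frac{k!}{(k/2)!}.$$ -/

import Mathlib

open Finset

theorem stmt_0 (H k : ℕ) (hH : 1 ≤ H) (hk : Even k) :
    (1 / (H : ℝ) ^ (k / 2)) *
      ∑ f ∈ (Finset.Nat.antidiagonalTuple H k).filter (fun f => ∀ i, Even (f i)),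
        ((Nat.multinomial Finset.univ f : ℝ) *
          (∏ i, ((f i).choose (f i / 2) : ℝ)) *
          (2 : ℝ) ^ (-((Finset.univ.filter fun i => 1 ≤ f i).card : ℤ)))
      ≤ (k.factorial : ℝ) / ((k / 2).factorial : ℝ) := by
  set n := k / 2 with hn
  set S := (Finset.Nat.antidiagonalTuple H k).filter (fun f => ∀ i, Even (f i)) with hS
  have hHpos : (0:ℝ) < (H:ℝ) ^ n := by positivity
  -- key per-term identity
  have key : ∀ f ∈ S, (Nat.multinomial Finset.univ f : ℝ) *
      (∏ i, ((f i).choose (f i / 2) : ℝ)) ≤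
      ((k.factorial : ℝ) / ((n).factorial : ℝ)) *
        (Nat.multinomial Finset.univ (fun i => f i / 2) : ℝ) := by
    intro f hf
    rw [hS, mem_filter, Finset.Nat.mem_antidiagonalTuple] at hf
    obtain ⟨hsum, heven⟩ := hf
    set g : Fin H → ℕ := fun i => f i / 2 with hg
    have hfg : ∀ i, f i = 2 * g i := fun i => (Nat.two_mul_div_two_of_even (heven i)).symm
    have hgsum : ∑ i, g i = n := by
      have h2 : 2 * ∑ i, g i = k := by
        rw [Finset.mul_sum]
        rw [← hsum]
        exact Finset.sum_congr rfl fun i _ => (hfg i).symm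
      omega
    have A : (∏ i, ((f i).factorial : ℝ)) * (Nat.multinomial Finset.univ f : ℝ) = (k.factorial : ℝ) := by
      have := Nat.multinomial_spec Finset.univ f
      rw [hsum] at this
      exact_mod_cast congrArg (Nat.cast : ℕ → ℝ) this
    have B : (∏ i, ((g i).factorial : ℝ)) * (Nat.multinomial Finset.univ g : ℝ) = ((n).factorial : ℝ) := by
      have := Nat.multinomial_spec Finset.univ g
      rw [hgsum] at this
      exact_mod_cast congrArg (Nat.cast : ℕ → ℝ) this
    have C : ∀ i, ((f i).choose (g i) : ℝ) * (((g i).factorial : ℝ) * ((g i).factorial : ℝ)) = ((f i).factorial : ℝ) := by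
      intro i
      have h1 : g i ≤ f i := by rw [hfg i]; omega
      have h2 : f i - g i = g i := by rw [hfg i]; omega
      have := Nat.choose_mul_factorial_mul_factorial h1
      rw [h2] at this
      exact_mod_cast congrArg (Nat.cast : ℕ → ℝ) (by linarith [this] : (f i).choose (g i) * ((g i).factorial * (g i).factorial) = (f i).factorial)
    have hprodC : (∏ i, ((f i).choose (g i) : ℝ)) *
        ((∏ i, ((g i).factorial : ℝ)) * (∏ i, ((g i).factorial : ℝ))) = ∏ i, ((f i).factorial : ℝ) := by
      rw [← Finset.prod_mul_distrib, ← Finset.prod_mul_distrib]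
      exact Finset.prod_congr rfl fun i _ => C i
    have hgne : (∏ i, ((g i).factorial : ℝ)) ≠ 0 := by positivity
    have hnne : ((n).factorial : ℝ) ≠ 0 := by positivity
    set P := ∏ i, ((g i).factorial : ℝ) with hP
    have hP1 : (1:ℝ) ≤ P := by
      rw [hP]
      calc (1:ℝ) = ∏ _i : Fin H, (1:ℝ) := by simp
        _ ≤ ∏ i, ((g i).factorial : ℝ) := by
            apply Finset.prod_le_prod (fun i _ => by norm_num)
            intro i _
            exact_mod_cast Nat.one_le_iff_ne_zero.mpr (g i).factorial_ne_zero
    have hPpos : (0:ℝ) < P := lt_of_lt_of_le one_pos hP1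
    have hmc : (0:ℝ) ≤ (Nat.multinomial Finset.univ f : ℝ) * (∏ i, ((f i).choose (f i / 2) : ℝ)) := by
      positivity
    have E1 : ((Nat.multinomial Finset.univ f : ℝ) * (∏ i, ((f i).choose (f i / 2) : ℝ))) * (P * P)
        = (k.factorial : ℝ) := by
      calc ((Nat.multinomial Finset.univ f : ℝ) * (∏ i, ((f i).choose (f i / 2) : ℝ))) * (P * P)
          = ((∏ i, ((f i).choose (g i) : ℝ)) * (P * P)) * (Nat.multinomial Finset.univ f : ℝ) := by
            ring
        _ = (∏ i, ((f i).factorial : ℝ)) * (Nat.multinomial Finset.univ f : ℝ) := by rw [hprodC]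
        _ = (k.factorial : ℝ) := A
    have E2 : (((k.factorial : ℝ) / ((n).factorial : ℝ)) *
        (Nat.multinomial Finset.univ g : ℝ)) * P = (k.factorial : ℝ) := by
      have hB : P * (Nat.multinomial Finset.univ g : ℝ) = ((n).factorial : ℝ) := B
      field_simp
      nlinarith [hB]
    have hXY : ((Nat.multinomial Finset.univ f : ℝ) *
        (∏ i, ((f i).choose (f i / 2) : ℝ))) * P =
        ((k.factorial : ℝ) / ((n).factorial : ℝ)) * (Nat.multinomial Finset.univ g : ℝ) := by
      apply mul_right_cancel₀ hgne
      calc ((Nat.multinomial Finset.univ f : ℝ) * (∏ i, ((f i).choose (f i / 2) : ℝ))) * P * P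
          = ((Nat.multinomial Finset.univ f : ℝ) * (∏ i, ((f i).choose (f i / 2) : ℝ))) * (P * P) := by
            ring
        _ = (k.factorial : ℝ) := E1
        _ = (((k.factorial : ℝ) / ((n).factorial : ℝ)) * (Nat.multinomial Finset.univ g : ℝ)) * P :=
            E2.symm
    have hXXP := mul_le_mul_of_nonneg_left hP1 hmc
    show (Nat.multinomial Finset.univ f : ℝ) * (∏ i, ((f i).choose (f i / 2) : ℝ)) ≤
        ((k.factorial : ℝ) / ((n).factorial : ℝ)) * (Nat.multinomial Finset.univ g : ℝ)
    nlinarith [hXY, hXXP]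
  -- bound each term
  have step1 : ∑ f ∈ S, ((Nat.multinomial Finset.univ f : ℝ) *
          (∏ i, ((f i).choose (f i / 2) : ℝ)) *
          (2 : ℝ) ^ (-((Finset.univ.filter fun i => 1 ≤ f i).card : ℤ)))
      ≤ ((k.factorial : ℝ) / ((n).factorial : ℝ)) *
        ∑ f ∈ S, (Nat.multinomial Finset.univ (fun i => f i / 2) : ℝ) := by
    rw [Finset.mul_sum]
    apply Finset.sum_le_sum
    intro f hf
    have h1 : (2 : ℝ) ^ (-((Finset.univ.filter fun i => 1 ≤ f i).card : ℤ)) ≤ 1 := by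
      apply zpow_le_one_of_nonpos₀ (by norm_num)
      simp
    have h2 : (0:ℝ) ≤ (Nat.multinomial Finset.univ f : ℝ) * (∏ i, ((f i).choose (f i / 2) : ℝ)) := by
      positivity
    calc (Nat.multinomial Finset.univ f : ℝ) * (∏ i, ((f i).choose (f i / 2) : ℝ)) *
          (2 : ℝ) ^ (-((Finset.univ.filter fun i => 1 ≤ f i).card : ℤ))
        ≤ (Nat.multinomial Finset.univ f : ℝ) * (∏ i, ((f i).choose (f i / 2) : ℝ)) * 1 :=
          mul_le_mul_of_nonneg_left h1 h2
      _ = (Nat.multinomial Finset.univ f : ℝ) * (∏ i, ((f i).choose (f i / 2) : ℝ)) := mul_one _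
      _ ≤ ((k.factorial : ℝ) / ((n).factorial : ℝ)) *
          (Nat.multinomial Finset.univ (fun i => f i / 2) : ℝ) := key f hf
  -- sum of halved multinomials bounded by H^n
  have step2 : ∑ f ∈ S, (Nat.multinomial Finset.univ (fun i => f i / 2) : ℝ)
      ≤ (H : ℝ) ^ n := by
    have himg : ∑ f ∈ S, (Nat.multinomial Finset.univ (fun i => f i / 2) : ℝ)
        = ∑ g ∈ S.image (fun f i => f i / 2), (Nat.multinomial Finset.univ g : ℝ) := by
      rw [Finset.sum_image]
      intro f hf f' hf' h
      rw [hS, Finset.mem_coe, mem_filter] at hf hf'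
      funext i
      have h1 := congrFun h i
      have e1 := Nat.two_mul_div_two_of_even (hf.2 i)
      have e2 := Nat.two_mul_div_two_of_even (hf'.2 i)
      simp only at h1
      omega
    rw [himg]
    have hsub : S.image (fun f i => f i / 2) ⊆ Finset.Nat.antidiagonalTuple H n := by
      intro g hg
      rw [Finset.mem_image] at hg
      obtain ⟨f, hf, rfl⟩ := hg
      rw [hS, mem_filter, Finset.Nat.mem_antidiagonalTuple] at hf
      rw [Finset.Nat.mem_antidiagonalTuple]
      have h2 : 2 * ∑ i, f i / 2 = k := by
        rw [Finset.mul_sum, ← hf.1]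
        exact Finset.sum_congr rfl fun i _ => Nat.two_mul_div_two_of_even (hf.2 i)
      omega
    calc ∑ g ∈ S.image (fun f i => f i / 2), (Nat.multinomial Finset.univ g : ℝ)
        ≤ ∑ g ∈ Finset.Nat.antidiagonalTuple H n, (Nat.multinomial Finset.univ g : ℝ) :=
          Finset.sum_le_sum_of_subset_of_nonneg hsub (fun g _ _ => by positivity)
      _ = (H : ℝ) ^ n := by
          have := Finset.sum_pow_eq_sum_piAntidiag (univ : Finset (Fin H)) (fun _ => (1:ℝ)) n
          simp only [Finset.piAntidiag_univ_fin_eq_antidiagonalTuple, one_pow, prod_const_one,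
            mul_one, sum_const, nsmul_eq_mul, mul_one, Finset.card_univ, Fintype.card_fin] at this
          exact this.symm
  have hfac : (0:ℝ) ≤ (k.factorial : ℝ) / ((n).factorial : ℝ) := by positivity
  calc (1 / (H : ℝ) ^ n) * ∑ f ∈ S, ((Nat.multinomial Finset.univ f : ℝ) *
          (∏ i, ((f i).choose (f i / 2) : ℝ)) *
          (2 : ℝ) ^ (-((Finset.univ.filter fun i => 1 ≤ f i).card : ℤ)))
      ≤ (1 / (H : ℝ) ^ n) * (((k.factorial : ℝ) / ((n).factorial : ℝ)) * ((H : ℝ) ^ n)) := by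
        apply mul_le_mul_of_nonneg_left _ (by positivity)
        exact le_trans step1 (mul_le_mul_of_nonneg_left step2 hfac)
    _ = (k.factorial : ℝ) / ((n).factorial : ℝ) := by field_simp
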